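/- arXiv:1904.12272 — 3 statements merged into one kernel-verified Lean document; each statement's English description precedes it below -/
import Mathlib

section
/- Let φ ∈ ℝ and let τ_p, τ_s ∈ ℝ satisfy f_0·(τ_p − τ_s) ∉ ℤ. Then for all positive integers M and N, |(1/(M·N)) · ⟨Ξ_{M,N}(φ,τ_p), Ξ_{M,N}(φ,τ_s)⟩| ≤ 1/(N·|sin(π·f_0·(τ_p − τ_s))|). In particular, sup over M of |(1/(M·N)) · ⟨Ξ_{M,N}(φ,τ_p), Ξ_{M,N}(φ,τ_s)⟩| tends to 0 as N → ∞. (This is the case of Theorem 1 where two paths have the same angle but different delays.) -/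
/-- The beam-squint matrix Ξ_{M,N}(φ,τ) with entries
exp(−i·m·(1 + n·f0/fc)·φ) · exp(−i·2π·n·f0·τ). -/
noncomputable def Xi (f0 fc : ℝ) (M N : ℕ) (φ τ : ℝ) : Matrix (Fin M) (Fin N) ℂ :=
  Matrix.of fun m n =>
    Complex.exp (-Complex.I * ((m : ℕ) : ℂ) * (1 + ((n : ℕ) : ℂ) * (f0 : ℂ) / (fc : ℂ)) * (φ : ℂ)) *
    Complex.exp (-Complex.I * (2 * (Real.pi : ℂ) * ((n : ℕ) : ℂ) * (f0 : ℂ) * (τ : ℂ)))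

/-- Frobenius inner product ⟨A, B⟩ = Σ_{m,n} conj(A_{m,n})·B_{m,n}. -/
noncomputable def frobInner (M N : ℕ) (A B : Matrix (Fin M) (Fin N) ℂ) : ℂ :=
  ∑ m, ∑ n, (starRingEnd ℂ) (A m n) * B m n

lemma aux_abs_exp_sub_one (x : ℝ) :
    ‖Complex.exp ((x : ℂ) * Complex.I) - 1‖ = 2 * |Real.sin (x / 2)| := by
  rw [Complex.exp_mul_I]
  have h1 : Complex.cos x + Complex.sin x * Complex.I - 1 =
      ((Real.cos x - 1 : ℝ) : ℂ) + ((Real.sin x : ℝ) : ℂ) * Complex.I := by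
    push_cast [Complex.ofReal_cos, Complex.ofReal_sin]
    ring
  rw [h1, Complex.norm_add_mul_I]
  have h2 : (Real.cos x - 1) ^ 2 + Real.sin x ^ 2 = (2 * |Real.sin (x / 2)|) ^ 2 := by
    have hc : Real.cos x = 1 - 2 * Real.sin (x / 2) ^ 2 := by
      have h2 : Real.cos (2 * (x/2)) = 2 * Real.cos (x/2) ^ 2 - 1 := Real.cos_two_mul _
      have h3 : Real.sin (x/2) ^ 2 + Real.cos (x/2) ^ 2 = 1 := Real.sin_sq_add_cos_sq _
      have h4 : 2 * (x/2) = x := by ring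
      rw [h4] at h2
      linarith
    have hs : Real.sin x ^ 2 = (2 * Real.sin (x/2) * Real.cos (x/2)) ^ 2 := by
      rw [← Real.sin_two_mul]; ring_nf
    have hsq : |Real.sin (x/2)| ^ 2 = Real.sin (x/2) ^ 2 := sq_abs _
    have := Real.sin_sq_add_cos_sq (x / 2)
    nlinarith
  rw [h2, Real.sqrt_sq (by positivity)]

lemma frob_eq (f0 fc : ℝ) (φ τp τs : ℝ) (M N : ℕ) :
    frobInner M N (Xi f0 fc M N φ τp) (Xi f0 fc M N φ τs) =
      (M : ℂ) * ∑ n ∈ Finset.range N,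
        (Complex.exp (((2 * Real.pi * (f0 * (τp - τs)) : ℝ) : ℂ) * Complex.I)) ^ n := by
  unfold frobInner Xi
  have hterm : ∀ (m n : ℕ),
      (starRingEnd ℂ) (Complex.exp (-Complex.I * (m:ℂ) * (1 + (n:ℂ) * (f0:ℂ)/(fc:ℂ)) * (φ:ℂ)) *
        Complex.exp (-Complex.I * (2*(Real.pi:ℂ)*(n:ℂ)*(f0:ℂ)*(τp:ℂ)))) *
      (Complex.exp (-Complex.I * (m:ℂ) * (1 + (n:ℂ)*(f0:ℂ)/(fc:ℂ)) * (φ:ℂ)) *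
        Complex.exp (-Complex.I * (2*(Real.pi:ℂ)*(n:ℂ)*(f0:ℂ)*(τs:ℂ)))) =
      (Complex.exp (((2 * Real.pi * (f0 * (τp - τs)) : ℝ) : ℂ) * Complex.I)) ^ n := by
    intro m n
    rw [map_mul, ← Complex.exp_conj, ← Complex.exp_conj, ← Complex.exp_nat_mul,
        ← Complex.exp_add, ← Complex.exp_add, ← Complex.exp_add]
    congr 1
    simp only [map_mul, map_add, map_one, map_div₀, map_neg, Complex.conj_I,
      Complex.conj_ofReal, map_natCast, map_ofNat]
    push_cast
    ring
  simp only [Matrix.of_apply]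
  calc (∑ m : Fin M, ∑ n : Fin N, _) = ∑ m : Fin M, ∑ n : Fin N,
        (Complex.exp (((2 * Real.pi * (f0 * (τp - τs)) : ℝ) : ℂ) * Complex.I)) ^ (n : ℕ) := by
        refine Finset.sum_congr rfl fun m _ => Finset.sum_congr rfl fun n _ => hterm m n
    _ = _ := by
        rw [Finset.sum_const, Finset.card_univ, Fintype.card_fin, nsmul_eq_mul]
        congr 1
        exact Fin.sum_univ_eq_sum_range _ N

/-- same angle, different delays with f0·(τp − τs) ∉ ℤ: the normalized
Frobenius inner product is bounded by 1/(N·|sin(π·f0·(τp − τs))|), and its supremum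
over M tends to 0 as N → ∞. -/
theorem stmt_1 (f0 fc : ℝ) (hf0 : 0 < f0) (hfc : 0 < fc) (φ τp τs : ℝ)
    (h : ∀ k : ℤ, f0 * (τp - τs) ≠ (k : ℝ)) :
    (∀ M N : ℕ, 0 < M → 0 < N →
      ‖(1 / ((M : ℂ) * (N : ℂ))) *
          frobInner M N (Xi f0 fc M N φ τp) (Xi f0 fc M N φ τs)‖ ≤
        1 / ((N : ℝ) * |Real.sin (Real.pi * (f0 * (τp - τs)))|)) ∧
    Filter.Tendsto (fun N : ℕ =>
      ⨆ M : ℕ, ‖(1 / ((M : ℂ) * (N : ℂ))) *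
          frobInner M N (Xi f0 fc M N φ τp) (Xi f0 fc M N φ τs)‖)
      Filter.atTop (nhds 0) := by
  set θ : ℝ := f0 * (τp - τs) with hθ
  set s : ℝ := |Real.sin (Real.pi * θ)| with hsdef
  have hsin : Real.sin (Real.pi * θ) ≠ 0 := by
    intro heq
    obtain ⟨n, hn⟩ := Real.sin_eq_zero_iff.mp heq
    exact h n (mul_left_cancel₀ Real.pi_ne_zero (by linarith)).symm
  have hs : 0 < s := abs_pos.mpr hsin
  set z : ℂ := Complex.exp (((2 * Real.pi * θ : ℝ) : ℂ) * Complex.I) with hzdef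
  have habsz1 : ‖z - 1‖ = 2 * s := by
    rw [hzdef, aux_abs_exp_sub_one]
    congr 2
    ring
  have hz1 : z ≠ 1 := by
    intro hz
    apply hsin
    have : ‖z - 1‖ = 0 := by rw [hz, sub_self, norm_zero]
    rw [habsz1] at this
    have : s = 0 := by linarith
    exact abs_eq_zero.mp this
  -- bound on partial geometric sums
  have hgeom : ∀ N : ℕ, ‖∑ n ∈ Finset.range N, z ^ n‖ ≤ 1 / s := by
    intro N
    rw [geom_sum_eq hz1, norm_div, habsz1]
    have h1 : ‖z ^ N - 1‖ ≤ 2 := by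
      calc ‖z ^ N - 1‖ ≤ ‖z ^ N‖ + ‖(1:ℂ)‖ :=
            norm_sub_le _ _
        _ = 1 + 1 := by
            rw [norm_pow, hzdef, Complex.norm_exp_ofReal_mul_I, one_pow, norm_one]
        _ = 2 := by norm_num
    calc ‖z ^ N - 1‖ / (2 * s) ≤ 2 / (2 * s) := by gcongr
      _ = 1 / s := by field_simp
  -- general bound for all M N
  have hbd : ∀ M N : ℕ,
      ‖(1 / ((M : ℂ) * (N : ℂ))) *
        frobInner M N (Xi f0 fc M N φ τp) (Xi f0 fc M N φ τs)‖ ≤ 1 / ((N : ℝ) * s) := by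
    intro M N
    rcases Nat.eq_zero_or_pos M with hM | hM
    · subst hM
      simp [frobInner]
      positivity
    rcases Nat.eq_zero_or_pos N with hN | hN
    · subst hN
      simp [frobInner]
    have hMne : ((M : ℂ)) ≠ 0 := Nat.cast_ne_zero.mpr hM.ne'
    rw [frob_eq]
    have hrw : (1 / ((M : ℂ) * (N : ℂ))) * ((M : ℂ) * ∑ n ∈ Finset.range N, z ^ n)
        = (∑ n ∈ Finset.range N, z ^ n) / (N : ℂ) := by
      rw [div_mul_eq_mul_div, one_mul]
      exact mul_div_mul_left _ _ hMne
    rw [hrw, norm_div, Complex.norm_natCast]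
    calc ‖∑ n ∈ Finset.range N, z ^ n‖ / (N : ℝ) ≤ (1 / s) / (N : ℝ) := by
          gcongr
          exact hgeom N
      _ = 1 / ((N : ℝ) * s) := by
          rw [div_div, mul_comm]
  refine ⟨fun M N _ _ => hbd M N, ?_⟩
  have hnn : ∀ N : ℕ, 0 ≤ ⨆ M : ℕ, ‖(1 / ((M : ℂ) * (N : ℂ))) *
      frobInner M N (Xi f0 fc M N φ τp) (Xi f0 fc M N φ τs)‖ := by
    intro N
    have hb : BddAbove (Set.range fun M : ℕ => ‖(1 / ((M : ℂ) * (N : ℂ))) *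
        frobInner M N (Xi f0 fc M N φ τp) (Xi f0 fc M N φ τs)‖) := by
      refine ⟨1 / ((N : ℝ) * s), ?_⟩
      rintro _ ⟨M, rfl⟩
      exact hbd M N
    exact le_trans (norm_nonneg _) (le_ciSup hb 0)
  have hub : ∀ N : ℕ, (⨆ M : ℕ, ‖(1 / ((M : ℂ) * (N : ℂ))) *
      frobInner M N (Xi f0 fc M N φ τp) (Xi f0 fc M N φ τs)‖) ≤ 1 / ((N : ℝ) * s) :=
    fun N => ciSup_le fun M => hbd M N
  have hlim : Filter.Tendsto (fun N : ℕ => 1 / ((N : ℝ) * s)) Filter.atTop (nhds 0) := by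
    have h1 : Filter.Tendsto (fun N : ℕ => (N : ℝ) * s) Filter.atTop Filter.atTop :=
      Filter.Tendsto.atTop_mul_const hs tendsto_natCast_atTop_atTop
    have h2 := h1.inv_tendsto_atTop
    simp only [Pi.inv_def] at h2
    simpa [one_div] using h2
  exact squeeze_zero hnn hub hlim
end

section
/- Fix a positive integer N and let φ_p, φ_s ∈ ℝ be such that for every n ∈ {0, 1, …, N−1}, (1 + n·f_0/f_c)·(φ_p − φ_s) ∉ 2πℤ. Then for all τ_p, τ_s ∈ ℝ, the quantity (1/(M·N)) · ⟨Ξ_{M,N}(φ_p,τ_p), Ξ_{M,N}(φ_s,τ_s)⟩ tends to 0 as M → ∞. (This is the case of Theorem 1 where two paths have different angles.) -/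
open Filter Finset

/-- Average of a geometric sum of a unit-norm `z ≠ 1` tends to 0. -/
lemma geom_avg (z : ℂ) (hz : ‖z‖ = 1) (hz1 : z ≠ 1) :
    Tendsto (fun M : ℕ => (1/(M:ℂ)) * ∑ m ∈ Finset.range M, z^m) atTop (nhds 0) := by
  have hzn : 0 < ‖z - 1‖ := by
    simp [norm_pos_iff, sub_eq_zero, hz1]
  refine squeeze_zero_norm (a := fun M : ℕ => (2 / ‖z - 1‖) / M) (fun M => ?_)
    (tendsto_const_div_atTop_nhds_zero_nat _)
  have h1 : ‖z ^ M - 1‖ ≤ 2 := by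
    calc ‖z ^ M - 1‖ ≤ ‖z ^ M‖ + ‖(1:ℂ)‖ := norm_sub_le _ _
      _ = 2 := by simp [norm_pow, hz]; norm_num
  rw [norm_mul, geom_sum_eq hz1, norm_div, norm_div]
  simp only [norm_one, Complex.norm_natCast]
  rw [div_mul_div_comm, one_mul, div_div, mul_comm ‖z - 1‖]
  gcongr

/-- different angles: if for every n ∈ {0,…,N−1},
(1 + n·f0/fc)·(φp − φs) ∉ 2πℤ, then the normalized Frobenius inner product
tends to 0 as M → ∞. -/
theorem stmt_2 (f0 fc : ℝ) (hf0 : 0 < f0) (hfc : 0 < fc) (N : ℕ) (hN : 0 < N)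
    (φp φs : ℝ)
    (h : ∀ n : ℕ, n < N → ∀ k : ℤ, (1 + (n : ℝ) * f0 / fc) * (φp - φs) ≠ 2 * Real.pi * (k : ℝ))
    (τp τs : ℝ) :
    Filter.Tendsto (fun M : ℕ =>
      (1 / ((M : ℂ) * (N : ℂ))) * frobInner M N (Xi f0 fc M N φp τp) (Xi f0 fc M N φs τs))
      Filter.atTop (nhds 0) := by
  set θ : ℕ → ℝ := fun n => (1 + (n : ℝ) * f0 / fc) * (φp - φs) with hθ
  set z : ℕ → ℂ := fun n => Complex.exp (Complex.I * (θ n : ℂ)) with hzdef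
  set d : ℕ → ℂ := fun n => Complex.exp (Complex.I * ((2 * Real.pi * n * f0 * (τp - τs) : ℝ) : ℂ)) with hd
  -- entrywise identity
  have key : ∀ (M : ℕ) (m : Fin M) (n : Fin N),
      (starRingEnd ℂ) (Xi f0 fc M N φp τp m n) * Xi f0 fc M N φs τs m n
        = d n * (z n) ^ (m : ℕ) := by
    intro M m n
    simp only [Xi, Matrix.of_apply, map_mul, ← Complex.exp_conj, hzdef, hd,
      ← Complex.exp_nat_mul, ← Complex.exp_add]
    congr 1
    simp only [map_mul, map_add, map_one, map_div₀, Complex.conj_I, Complex.conj_ofReal,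
      map_natCast, map_ofNat, map_neg, hθ]
    push_cast
    ring
  -- rewrite the function
  have feq : ∀ M : ℕ,
      (1 / ((M : ℂ) * (N : ℂ))) * frobInner M N (Xi f0 fc M N φp τp) (Xi f0 fc M N φs τs)
        = ∑ n : Fin N, (d n / N) * ((1 / (M : ℂ)) * ∑ m ∈ Finset.range M, (z n) ^ m) := by
    intro M
    rw [frobInner]
    rw [Finset.sum_comm]
    rw [Finset.mul_sum]
    refine Finset.sum_congr rfl fun n _ => ?_
    rw [show (∑ m : Fin M, (starRingEnd ℂ) (Xi f0 fc M N φp τp m n) * Xi f0 fc M N φs τs m n)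
        = ∑ m : Fin M, d n * (z n) ^ (m : ℕ) from Finset.sum_congr rfl fun m _ => key M m n]
    rw [← Fin.sum_univ_eq_sum_range (fun m => (z n) ^ m) M]
    rw [← Finset.mul_sum]
    field_simp
  simp only [funext feq]
  have : (0 : ℂ) = ∑ _n : Fin N, 0 := by simp
  rw [this]
  apply tendsto_finset_sum
  intro n _
  rw [show (0:ℂ) = (d n / N) * 0 by ring]
  apply Tendsto.const_mul
  apply geom_avg
  · rw [hzdef]
    simp [Complex.norm_exp]
  · rw [hzdef]
    simp only [Ne, Complex.exp_eq_one_iff]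
    rintro ⟨k, hk⟩
    apply h n n.2 k
    have : (Complex.I * (θ n : ℂ)) = Complex.I * ((2 * Real.pi * k : ℝ) : ℂ) := by
      rw [hk]; push_cast; ring
    have := mul_left_cancel₀ Complex.I_ne_zero this
    exact_mod_cast this
end

section
/- Let D ∈ ℂ^{m×n}, let G ∈ ℂ^{n×n} be Hermitian positive definite, let λ > 0, and let y ∈ ℂ^m. With A := D^H·D + λ^{−1}·G and x* := A^{−1}·D^H·y, the minimum value of f(x) = Re(x^H·G·x) + λ·‖y − D·x‖₂² satisfies f(x*) = λ·(‖y‖₂² − Re(y^H·D·A^{−1}·D^H·y)). Consequently, minimizing f over x and then over a dictionary parameter is equivalent to minimizing the surrogate objective v = −Re(y^H·D·(D^H·D + λ^{−1}·G)^{−1}·D^H·y) of equation (36). -/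
open Matrix
open scoped ComplexOrder

/-- with A = D^H·D + λ⁻¹·G and x* = A⁻¹·D^H·y, the minimum value of
f(x) = Re(x^H·G·x) + λ·‖y − D·x‖₂² is
f(x*) = λ·(‖y‖₂² − Re(y^H·D·A⁻¹·D^H·y)), so minimizing f over x is equivalent to
minimizing the surrogate v = −Re(y^H·D·(D^H·D + λ⁻¹·G)⁻¹·D^H·y). -/
theorem stmt_12 (m n : ℕ) (D : Matrix (Fin m) (Fin n) ℂ)
    (G : Matrix (Fin n) (Fin n) ℂ) (hG : G.PosDef)
    (lam : ℝ) (hlam : 0 < lam) (y : Fin m → ℂ)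
    (A : Matrix (Fin n) (Fin n) ℂ) (hA : A = Dᴴ * D + ((lam : ℂ))⁻¹ • G)
    (f : (Fin n → ℂ) → ℝ)
    (hf : ∀ x : Fin n → ℂ, f x =
      (star x ⬝ᵥ G.mulVec x).re + lam * ∑ i, ‖y i - D.mulVec x i‖ ^ 2)
    (xstar : Fin n → ℂ) (hxstar : xstar = (A⁻¹).mulVec (Dᴴ.mulVec y)) :
    (∀ x : Fin n → ℂ, f xstar ≤ f x) ∧
    f xstar = lam * ((∑ i, ‖y i‖ ^ 2) -
      (star y ⬝ᵥ D.mulVec ((A⁻¹).mulVec (Dᴴ.mulVec y))).re) := by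
  -- positivity of the scaled G and of A
  have hsmul : (((lam : ℂ))⁻¹ • G).PosDef := by
    have hc : (0:ℂ) < ((lam:ℂ))⁻¹ := by
      rw [← Complex.ofReal_inv]
      exact_mod_cast inv_pos.mpr hlam
    refine posDef_iff_dotProduct_mulVec.mpr ⟨?_, ?_⟩
    · rw [IsHermitian, conjTranspose_smul, hG.1.eq]
      congr 1
      simp
    · intro x hx
      rw [smul_mulVec, dotProduct_smul]
      exact mul_pos hc ((posDef_iff_dotProduct_mulVec.mp hG).2 hx)
  have hApos : A.PosDef := by
    rw [hA]
    exact Matrix.PosDef.posSemidef_add (posSemidef_conjTranspose_mul_self D) hsmul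
  have hdet : IsUnit A.det := A.isUnit_iff_isUnit_det.mp hApos.isUnit
  have hAx : A *ᵥ xstar = Dᴴ *ᵥ y := by
    rw [hxstar, mulVec_mulVec, mul_nonsing_inv _ hdet, one_mulVec]
  have hAH : A.IsHermitian := hApos.isHermitian
  -- sum of squared norms is the real part of the self dot product
  have hnorm : ∀ (w : Fin m → ℂ), ∑ i, ‖w i‖ ^ 2 = (star w ⬝ᵥ w).re := by
    intro w
    simp [dotProduct, Complex.re_sum, ← Complex.normSq_eq_norm_sq,
      Complex.normSq_eq_conj_mul_self, Complex.normSq_apply]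
  -- quadratic expansion
  have key : ∀ x : Fin n → ℂ,
      star (x - xstar) ⬝ᵥ A *ᵥ (x - xstar) =
        star x ⬝ᵥ A *ᵥ x - star x ⬝ᵥ (Dᴴ *ᵥ y) - star y ⬝ᵥ (D *ᵥ x)
          + star xstar ⬝ᵥ (Dᴴ *ᵥ y) := by
    intro x
    have hvm : star xstar ᵥ* A = star y ᵥ* D := by
      have := star_mulVec (M := Aᴴ) (v := xstar)
      rw [conjTranspose_conjTranspose, hAH.eq, hAx, star_mulVec,
        conjTranspose_conjTranspose] at this
      exact this.symm
    have h1 : star xstar ⬝ᵥ A *ᵥ x = star y ⬝ᵥ (D *ᵥ x) := by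
      rw [dotProduct_mulVec, hvm, ← dotProduct_mulVec]
    have h2 : star x ⬝ᵥ A *ᵥ xstar = star x ⬝ᵥ (Dᴴ *ᵥ y) := by rw [hAx]
    have h4 : star xstar ⬝ᵥ A *ᵥ xstar = star xstar ⬝ᵥ (Dᴴ *ᵥ y) := by rw [hAx]
    simp only [star_sub, sub_dotProduct, mulVec_sub, dotProduct_sub, h2, h1, h4]
    ring
  -- the value of f at an arbitrary point
  have hfx : ∀ x : Fin n → ℂ,
      f x = lam * (star (x - xstar) ⬝ᵥ A *ᵥ (x - xstar)).re
        + lam * ((∑ i, ‖y i‖ ^ 2) - (star y ⬝ᵥ (D *ᵥ xstar)).re) := by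
    intro x
    have hv : ∑ i, ‖y i - D.mulVec x i‖ ^ 2 =
        (star (y - D *ᵥ x) ⬝ᵥ (y - D *ᵥ x)).re := by
      simpa using hnorm (y - D *ᵥ x)
    -- expand the residual dot product
    have hDx : star (D *ᵥ x) ⬝ᵥ y = star x ⬝ᵥ (Dᴴ *ᵥ y) := by
      rw [star_mulVec, ← dotProduct_mulVec]
    have hDxx : star (D *ᵥ x) ⬝ᵥ (D *ᵥ x) = star x ⬝ᵥ ((Dᴴ * D) *ᵥ x) := by
      rw [star_mulVec, ← dotProduct_mulVec, mulVec_mulVec]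
    have hres : star (y - D *ᵥ x) ⬝ᵥ (y - D *ᵥ x) =
        star y ⬝ᵥ y - star y ⬝ᵥ (D *ᵥ x) - star x ⬝ᵥ (Dᴴ *ᵥ y)
          + star x ⬝ᵥ ((Dᴴ * D) *ᵥ x) := by
      simp only [star_sub, sub_dotProduct, dotProduct_sub, hDx, hDxx]
      ring
    have hAsplit : star x ⬝ᵥ A *ᵥ x =
        star x ⬝ᵥ ((Dᴴ * D) *ᵥ x) + ((lam:ℂ))⁻¹ * (star x ⬝ᵥ G *ᵥ x) := by
      rw [hA, add_mulVec, dotProduct_add, smul_mulVec, dotProduct_smul,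
        smul_eq_mul]
    -- complex identity
    have hcx : ((lam:ℂ))⁻¹ * (star x ⬝ᵥ G *ᵥ x) + star (y - D *ᵥ x) ⬝ᵥ (y - D *ᵥ x) =
        star (x - xstar) ⬝ᵥ A *ᵥ (x - xstar) + star y ⬝ᵥ y
          - star xstar ⬝ᵥ (Dᴴ *ᵥ y) := by
      rw [hres, key x]
      linear_combination -hAsplit
    -- conjugate symmetry for the constant term
    have hconj : (star xstar ⬝ᵥ (Dᴴ *ᵥ y)).re = (star y ⬝ᵥ (D *ᵥ xstar)).re := by
      have h5 : star y ⬝ᵥ (D *ᵥ xstar) = star (star (D *ᵥ xstar) ⬝ᵥ y) :=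
        star_dotProduct _ _
      have h6 : star (D *ᵥ xstar) ⬝ᵥ y = star xstar ⬝ᵥ (Dᴴ *ᵥ y) := by
        rw [star_mulVec, ← dotProduct_mulVec]
      rw [h5, h6]
      simp
    -- put it all together on the real parts
    have hre := congrArg Complex.re hcx
    simp only [Complex.add_re, Complex.sub_re] at hre
    have hinv : (((lam:ℂ))⁻¹ * (star x ⬝ᵥ G *ᵥ x)).re =
        lam⁻¹ * (star x ⬝ᵥ G *ᵥ x).re := by
      rw [← Complex.ofReal_inv, Complex.re_ofReal_mul]
    rw [hinv, hconj] at hre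
    rw [hf x, hv, hnorm y]
    have hone : lam * lam⁻¹ = 1 := mul_inv_cancel₀ (ne_of_gt hlam)
    linear_combination lam * hre - (star x ⬝ᵥ G *ᵥ x).re * hone
  -- conclusion
  have hfxstar : f xstar = lam * ((∑ i, ‖y i‖ ^ 2) - (star y ⬝ᵥ (D *ᵥ xstar)).re) := by
    rw [hfx xstar]
    simp
  constructor
  · intro x
    rw [hfx x, hfxstar]
    have h0 : 0 ≤ (star (x - xstar) ⬝ᵥ A *ᵥ (x - xstar)).re :=
      hApos.posSemidef.re_dotProduct_nonneg _
    nlinarith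
  · rw [hfxstar, hxstar]
end
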